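/- Let R be a one-dimensional Cohen-Macaulay local ring and I an ideal containing a non-zero-divisor. If I is closed (i.e., Hom_R(I,I) = R, meaning every endomorphism of I is multiplication by an element of R) and I is reflexive (the natural map I → I** is an isomorphism), then I is a principal ideal. -/

import Mathlib

/-- A non-zero-divisor does not belong to any minimal prime. -/
lemma aux_nzd_notMem_minimalPrime {R : Type*} [CommRing R] {x : R}
    (hx : x ∈ nonZeroDivisors R) {q : Ideal R} (hq : q ∈ minimalPrimes R) : x ∉ q := by
  intro hxq
  have hqprime : q.IsPrime := hq.1.1
  -- the multiplicative set {s * x ^ n | s ∉ q}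
  let S : Submonoid R :=
  { carrier := {r | ∃ s ∉ q, ∃ n : ℕ, r = s * x ^ n}
    mul_mem' := by
      rintro r₁ r₂ ⟨s₁, hs₁, n₁, rfl⟩ ⟨s₂, hs₂, n₂, rfl⟩
      exact ⟨s₁ * s₂, fun h => ((hqprime.mem_or_mem h).elim hs₁ hs₂), n₁ + n₂, by ring⟩
    one_mem' := ⟨1, hqprime.ne_top ∘ (Ideal.eq_top_iff_one q).mpr, 0, by ring⟩ }
  have hdisj : Disjoint ((⊥ : Ideal R) : Set R) (S : Set R) := by
    rw [Set.disjoint_left]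
    rintro r hr ⟨s, hs, n, rfl⟩
    rw [SetLike.mem_coe, Ideal.mem_bot] at hr
    rw [(mul_right_mem_nonZeroDivisors_eq_zero_iff (pow_mem hx n)).mp hr] at hs
    exact hs q.zero_mem
  obtain ⟨p, hpprime, -, hpdisj⟩ := Ideal.exists_le_prime_disjoint ⊥ S hdisj
  have hpq : p ≤ q := by
    intro r hr
    by_contra hrq
    exact Set.disjoint_left.mp hpdisj hr ⟨r, hrq, 0, by ring⟩
  have hqp : q ≤ p := hq.2 ⟨hpprime, bot_le⟩ hpq
  have hxS : x ∈ (S : Set R) :=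
    ⟨1, hqprime.ne_top ∘ (Ideal.eq_top_iff_one q).mpr, 1, by ring⟩
  exact Set.disjoint_left.mp hpdisj (hqp hxq) hxS

theorem closed_reflexive_ideal_isPrincipal {R : Type*} [CommRing R] [IsNoetherianRing R]
    [IsLocalRing R] (hdim : ringKrullDim R = 1)
    (hdepth : ∃ r ∈ IsLocalRing.maximalIdeal R, r ∈ nonZeroDivisors R)
    (I : Ideal R) (hreg : ∃ a ∈ I, a ∈ nonZeroDivisors R)
    (hclosed : ∀ φ : ↥I →ₗ[R] ↥I, ∃ r : R, ∀ x : ↥I, (φ x : R) = r * (x : R))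
    (hrefl : Function.Bijective (Module.Dual.eval R ↥I)) :
    I.IsPrincipal := by
  classical
  obtain ⟨x, hxm, hxreg⟩ := hdepth
  obtain ⟨a₀, ha₀I, ha₀reg⟩ := hreg
  -- the basic symmetry identity `f a * b = f b * a`
  have symm : ∀ (f : Module.Dual R ↥I) (a b : ↥I), f a * (b : R) = f b * (a : R) := by
    intro f a b
    have h1 : ((b : R) • a : ↥I) = (a : R) • b := by
      ext
      simp [mul_comm]
    have h2 := congrArg f h1
    rw [map_smul, map_smul] at h2
    simpa [mul_comm] using h2
  by_cases hall : ∀ (f : Module.Dual R ↥I) (a : ↥I), f a ∈ IsLocalRing.maximalIdeal R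
  · -- derive a contradiction
    exfalso
    set J : Ideal R := Ideal.span {x} with hJ
    have hJm : J ≤ IsLocalRing.maximalIdeal R := (Ideal.span_singleton_le_iff_mem _).mpr hxm
    have hJne : J ≠ ⊤ := fun h =>
      (IsLocalRing.maximalIdeal.isMaximal R).ne_top (top_le_iff.mp (h ▸ hJm))
    have : Nontrivial (R ⧸ J) := Ideal.Quotient.nontrivial_iff.mpr hJne
    obtain ⟨p, hp⟩ := associatedPrimes.nonempty R (R ⧸ J)
    obtain ⟨hpprime, y', hy'⟩ := isAssociatedPrime_iff.mp hp
    -- `x ∈ p`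
    have hxp : x ∈ p := by
      rw [hy']
      rw [Submodule.mem_colon_singleton, Submodule.mem_bot]
      obtain ⟨r, rfl⟩ := Ideal.Quotient.mk_surjective y'
      · show Ideal.Quotient.mk J (x * r) = 0
        rw [Ideal.Quotient.eq_zero_iff_mem]
        exact Ideal.mul_mem_right r J (Ideal.subset_span rfl)
    -- `p = maximalIdeal R`
    have hpm : p = IsLocalRing.maximalIdeal R := by
      by_contra hne
      have hplt : p < IsLocalRing.maximalIdeal R :=
        lt_of_le_of_ne (IsLocalRing.le_maximalIdeal hpprime.ne_top) hne
      obtain ⟨q, hqmin, hqp⟩ := Ideal.exists_minimalPrimes_le (I := ⊥) (J := p) bot_le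
      have hqlt : q < p := lt_of_le_of_ne hqp
        (fun h => aux_nzd_notMem_minimalPrime hxreg hqmin (h ▸ hxp))
      have hqprime : q.IsPrime := hqmin.1.1
      -- build a chain of length 2 in the prime spectrum
      let Q : PrimeSpectrum R := ⟨q, hqprime⟩
      let P : PrimeSpectrum R := ⟨p, hpprime⟩
      let M : PrimeSpectrum R := ⟨IsLocalRing.maximalIdeal R,
        (IsLocalRing.maximalIdeal.isMaximal R).isPrime⟩
      have hQP : Q < P := hqlt
      have hPM : P < M := hplt
      let c : LTSeries (PrimeSpectrum R) :=
        ((RelSeries.singleton _ Q).snoc P (by exact hQP)).snoc M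
          (by exact hPM)
      have hlen : c.length = 2 := rfl
      have := Order.LTSeries.length_le_krullDim c
      rw [hlen] at this
      rw [show Order.krullDim (PrimeSpectrum R) = ringKrullDim R from rfl, hdim] at this
      norm_num at this
    -- lift `y'` to `y : R`
    obtain ⟨y, rfl⟩ := Ideal.Quotient.mk_surjective y'
    have hyJ : y ∉ J := by
      intro hyJ
      have : Ideal.Quotient.mk J y = 0 := (Ideal.Quotient.eq_zero_iff_mem).mpr hyJ
      rw [this] at hy'
      replace hy' : p = ⊤ := by
        rw [hy', Ideal.eq_top_iff_one, Submodule.mem_colon_singleton, smul_zero]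
        exact Submodule.zero_mem _
      exact (IsLocalRing.maximalIdeal.isMaximal R).ne_top (hpm.symm.trans hy')
    have hym : ∀ c ∈ IsLocalRing.maximalIdeal R, c * y ∈ J := by
      intro c hc
      rw [← hpm, hy'] at hc
      have := (Submodule.mem_bot R).mp (Submodule.mem_colon_singleton.mp hc)
      rw [← Ideal.Quotient.eq_zero_iff_mem]
      exact this
    -- construct the "multiplication by y/x" endomorphism of the dual
    have hdvd : ∀ (f : Module.Dual R ↥I) (a : ↥I), ∃ c : R, y * f a = x * c := by
      intro f a
      obtain ⟨c, hc⟩ := Ideal.mem_span_singleton.mp (hym (f a) (hall f a))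
      exact ⟨c, by rw [mul_comm y (f a), hc]⟩
    choose g hg using hdvd
    have hcancel : ∀ {c d : R}, x * c = x * d → c = d := by
      intro c d h
      rw [mul_comm x c, mul_comm x d] at h
      exact (mul_cancel_right_mem_nonZeroDivisors hxreg).mp h
    let Φf : Module.Dual R ↥I → Module.Dual R ↥I := fun f =>
      { toFun := fun a => g f a
        map_add' := by
          intro a b
          apply hcancel
          rw [← hg, map_add, mul_add, hg, hg, mul_add]
        map_smul' := by
          intro c a
          show g f (c • a) = c * g f a
          apply hcancel
          rw [← hg, map_smul, smul_eq_mul, mul_left_comm, hg]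
          ring }
    let Φ : Module.Dual R ↥I →ₗ[R] Module.Dual R ↥I :=
      { toFun := Φf
        map_add' := by
          intro f₁ f₂
          ext a
          show g (f₁ + f₂) a = g f₁ a + g f₂ a
          apply hcancel
          rw [← hg, LinearMap.add_apply, mul_add, hg, hg, mul_add]
        map_smul' := by
          intro c f
          ext a
          show g (c • f) a = c * g f a
          apply hcancel
          rw [← hg, LinearMap.smul_apply, smul_eq_mul, mul_left_comm, hg]
          ring }
    -- use reflexivity and closedness to see Φ is multiplication by a scalar
    let e : ↥I ≃ₗ[R] Module.Dual R (Module.Dual R ↥I) :=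
      LinearEquiv.ofBijective (Module.Dual.eval R ↥I) hrefl
    let θ : ↥I →ₗ[R] ↥I := e.symm.toLinearMap ∘ₗ Φ.dualMap ∘ₗ e.toLinearMap
    obtain ⟨r, hr⟩ := hclosed θ
    have hθ : ∀ a : ↥I, θ a = r • a := by
      intro a
      ext
      rw [hr a]
      rfl
    have hkey : ∀ (f : Module.Dual R ↥I) (a : ↥I), g f a = r * f a := by
      intro f a
      have h1 : Φ.dualMap (e a) = e (θ a) := by
        show Φ.dualMap (e a) = e (e.symm (Φ.dualMap (e a)))
        rw [LinearEquiv.apply_symm_apply]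
      rw [hθ a, map_smul] at h1
      have h2 := congrFun (congrArg DFunLike.coe h1) f
      simpa [e, Φ, Φf, Module.Dual.eval, LinearMap.dualMap, Module.Dual.transpose_apply] using h2
    -- specialize to the inclusion map and the regular element a₀
    have hfin := hg (Submodule.subtype I) ⟨a₀, ha₀I⟩
    rw [hkey] at hfin
    simp only [Submodule.subtype_apply] at hfin
    have : y = x * r := by
      have := hfin
      rw [show (x : R) * (r * a₀) = (x * r) * a₀ by ring] at this
      exact (mul_cancel_right_mem_nonZeroDivisors ha₀reg).mp this
    exact hyJ (Ideal.mem_span_singleton.mpr ⟨r, this⟩)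
  · -- easy case : some `f a` is a unit, and then `a` generates `I`
    push_neg at hall
    obtain ⟨f, a, hfa⟩ := hall
    have hu : IsUnit (f a) := by
      by_contra h
      exact hfa ((IsLocalRing.mem_maximalIdeal _).mpr h)
    obtain ⟨v, hv⟩ := hu.exists_left_inv
    refine ⟨⟨(a : R), ?_⟩⟩
    apply le_antisymm
    · intro b hb
      rw [Ideal.submodule_span_eq, Ideal.mem_span_singleton]
      refine ⟨v * f ⟨b, hb⟩, ?_⟩
      have h1 := symm f a ⟨b, hb⟩
      calc b = (v * f a) * b := by rw [hv]; ring
        _ = v * (f a * b) := by ring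
        _ = v * (f ⟨b, hb⟩ * a) := by rw [h1]
        _ = (a : R) * (v * f ⟨b, hb⟩) := by ring
    · rw [Ideal.submodule_span_eq, Ideal.span_le, Set.singleton_subset_iff]
      exact a.2
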